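/- Let Y ∈ ℝ^{n×N}, W ∈ ℝ^{n×n}, X ∈ ℝ^{n×N}, α ∈ ℝ with α ≠ 0, λ₀ > 0, ξ > 0, s ≥ 1. Define g_Y(W, X) = ‖WY − X‖_F² + λ₀‖Y‖_F²·(ξ‖W‖_F² − log|det W|). Then g_{αY}(W, αX) = α²·g_Y(W, X); consequently (W, X) minimizes g_Y over {X : ‖X_i‖₀ ≤ s ∀i} if and only if (W, αX) minimizes g_{αY} over the same constraint set. -/

import Mathlib

open Matrix in
theorem stmt_19 (n N : ℕ) (Y X : Matrix (Fin n) (Fin N) ℝ) (W : Matrix (Fin n) (Fin n) ℝ)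
    (α lam₀ ξ : ℝ) (hα : α ≠ 0) (hlam₀ : 0 < lam₀) (hξ : 0 < ξ) (s : ℕ) (hs : 1 ≤ s)
    (hX : ∀ i : Fin N, (Finset.univ.filter fun j => X j i ≠ 0).card ≤ s) :
    let g : Matrix (Fin n) (Fin N) ℝ → Matrix (Fin n) (Fin n) ℝ → Matrix (Fin n) (Fin N) ℝ → ℝ :=
      fun Y' W' X' => (∑ i, ∑ j, ((W' * Y' - X') i j) ^ 2)
        + (lam₀ * ∑ i, ∑ j, (Y' i j) ^ 2) * (ξ * (∑ i, ∑ j, (W' i j) ^ 2) - Real.log |W'.det|)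
    g (α • Y) W (α • X) = α ^ 2 * g Y W X ∧
    ((∀ (W' : Matrix (Fin n) (Fin n) ℝ) (X' : Matrix (Fin n) (Fin N) ℝ),
        (∀ i : Fin N, (Finset.univ.filter fun j => X' j i ≠ 0).card ≤ s) →
        g Y W X ≤ g Y W' X') ↔
      (∀ (W' : Matrix (Fin n) (Fin n) ℝ) (X' : Matrix (Fin n) (Fin N) ℝ),
        (∀ i : Fin N, (Finset.univ.filter fun j => X' j i ≠ 0).card ≤ s) →
        g (α • Y) W (α • X) ≤ g (α • Y) W' X')) := by
  intro g
  have hα2 : (0:ℝ) < α ^ 2 := by positivity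
  have key : ∀ (W' : Matrix (Fin n) (Fin n) ℝ) (X' : Matrix (Fin n) (Fin N) ℝ),
      g (α • Y) W' (α • X') = α ^ 2 * g Y W' X' := by
    intro W' X'
    have h1 : W' * (α • Y) - α • X' = α • (W' * Y - X') := by
      rw [Matrix.mul_smul, smul_sub]
    simp only [g, h1, Matrix.smul_apply, smul_eq_mul, mul_pow, ← Finset.mul_sum]
    ring
  refine ⟨key W X, ?_⟩
  constructor
  · intro h W' X' hX'
    have hX'' : ∀ i : Fin N,
        (Finset.univ.filter fun j => (α⁻¹ • X') j i ≠ 0).card ≤ s := by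
      intro i
      convert hX' i using 3
      rename_i j
      simp [Matrix.smul_apply, smul_eq_mul, hα]
    have := h W' (α⁻¹ • X') hX''
    have hsc : α • (α⁻¹ • X') = X' := by
      rw [smul_smul, mul_inv_cancel₀ hα, one_smul]
    calc g (α • Y) W (α • X) = α ^ 2 * g Y W X := key W X
      _ ≤ α ^ 2 * g Y W' (α⁻¹ • X') := by nlinarith
      _ = g (α • Y) W' (α • (α⁻¹ • X')) := (key W' _).symm
      _ = g (α • Y) W' X' := by rw [hsc]
  · intro h W' X' hX'
    have hX'' : ∀ i : Fin N,
        (Finset.univ.filter fun j => (α • X') j i ≠ 0).card ≤ s := by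
      intro i
      convert hX' i using 3
      rename_i j
      simp [Matrix.smul_apply, smul_eq_mul, hα]
    have h2 := h W' (α • X') hX''
    rw [key W X, key W' X'] at h2
    exact le_of_mul_le_mul_left h2 hα2
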